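/- Let (X, μ) be a probability space and F : X → ℝ₊ measurable. Suppose there exist γ > 0, C₁, C₂ > 0 and θ ∈ (0,1) such that μ(F > λ) ≤ C₁ exp(-A^{-2/θ} λ²) + C₂ A^{-2/(1-θ)} λ^{-2} for all λ ≥ 2 and all A > 0. Then there exist constants C, λ₀ > 0 such that μ(F > λ) ≤ C λ^{-2/(1-θ)} (log λ)^{θ/(1-θ)} for all λ ≥ λ₀. -/

import Mathlib

open MeasureTheory

/-- Optimization step in the interpolation tail estimate: if for all `λ ≥ 2` and all
`A > 0` one has `μ(F > λ) ≤ C₁ exp(-A^{-2/θ} λ²) + C₂ A^{-2/(1-θ)} λ^{-2}`, then there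
are `C, λ₀ > 0` with `μ(F > λ) ≤ C λ^{-2/(1-θ)} (log λ)^{θ/(1-θ)}` for all `λ ≥ λ₀`. -/
theorem interpolation_tail_optimization
    {X : Type*} [MeasurableSpace X] (μ : Measure X) [IsProbabilityMeasure μ]
    (F : X → ℝ) (hF : Measurable F) (hFnn : ∀ x, 0 ≤ F x)
    (γ C₁ C₂ θ : ℝ) (hγ : 0 < γ) (hC₁ : 0 < C₁) (hC₂ : 0 < C₂)
    (hθ : θ ∈ Set.Ioo (0:ℝ) 1)
    (hbound : ∀ lam : ℝ, 2 ≤ lam → ∀ A : ℝ, 0 < A →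
      (μ {x | lam < F x}).toReal ≤
        C₁ * Real.exp (-(A ^ (-(2/θ))) * lam ^ 2) + C₂ * A ^ (-(2/(1-θ))) * lam ^ (-(2:ℝ))) :
    ∃ C lam₀ : ℝ, 0 < C ∧ 0 < lam₀ ∧ ∀ lam : ℝ, lam₀ ≤ lam →
      (μ {x | lam < F x}).toReal ≤
        C * lam ^ (-(2/(1-θ))) * (Real.log lam) ^ (θ/(1-θ)) := by
  obtain ⟨hθ0, hθ1⟩ := hθ
  have h1θ : 0 < 1 - θ := by linarith
  set c : ℝ := 2 / (1 - θ) with hc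
  set p : ℝ := θ / (1 - θ) with hp
  have hcpos : 0 < c := by positivity
  have hppos : 0 < p := by positivity
  refine ⟨C₁ + C₂ * c ^ p, max 2 (Real.exp 1), by positivity,
    lt_of_lt_of_le two_pos (le_max_left _ _), ?_⟩
  intro lam hlam
  have hlam2 : 2 ≤ lam := le_trans (le_max_left _ _) hlam
  have hlame : Real.exp 1 ≤ lam := le_trans (le_max_right _ _) hlam
  have hlampos : 0 < lam := by linarith
  have hL1 : 1 ≤ Real.log lam := by
    have := Real.log_le_log (Real.exp_pos 1) hlame
    rwa [Real.log_exp] at this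
  set L := Real.log lam with hLdef
  have hLpos : 0 < L := lt_of_lt_of_le one_pos hL1
  set B : ℝ := lam ^ 2 / (c * L) with hB
  have hBpos : 0 < B := by positivity
  set A : ℝ := B ^ (θ / 2) with hA
  have hApos : 0 < A := Real.rpow_pos_of_pos hBpos _
  have key := hbound lam hlam2 A hApos
  -- first exponent
  have e1 : A ^ (-(2 / θ)) = B⁻¹ := by
    rw [hA, ← Real.rpow_mul hBpos.le]
    have h : θ / 2 * (-(2 / θ)) = -1 := by field_simp
    rw [h, Real.rpow_neg_one]
  have eBinv : B⁻¹ = c * L / lam ^ 2 := by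
    rw [hB, inv_div]
  have term1 : C₁ * Real.exp (-(A ^ (-(2 / θ))) * lam ^ 2) = C₁ * lam ^ (-c) := by
    rw [e1, eBinv]
    have hlamne : (lam : ℝ) ^ 2 ≠ 0 := by positivity
    have h : -(c * L / lam ^ 2) * lam ^ 2 = -(c * L) := by field_simp
    rw [h, Real.rpow_def_of_pos hlampos]
    ring_nf
    rfl
  -- second exponent
  have e2 : A ^ (-(2 / (1 - θ))) = (c * L) ^ p / lam ^ (2 * p) := by
    rw [hA, ← Real.rpow_mul hBpos.le]
    have h : θ / 2 * (-(2 / (1 - θ))) = -p := by rw [hp]; field_simp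
    rw [h, Real.rpow_neg hBpos.le, hB, Real.div_rpow (by positivity) (by positivity), inv_div,
      ← Real.rpow_natCast lam 2, ← Real.rpow_mul hlampos.le]
    norm_num
  have hlam_rpow_add : lam ^ (-(2 * p)) * lam ^ (-(2:ℝ)) = lam ^ (-c) := by
    rw [← Real.rpow_add hlampos]
    congr 1
    rw [hp, hc]; field_simp; ring
  have term2 : C₂ * A ^ (-(2 / (1 - θ))) * lam ^ (-(2:ℝ))
      = C₂ * c ^ p * L ^ p * lam ^ (-c) := by
    rw [e2, Real.mul_rpow hcpos.le hLpos.le, div_eq_mul_inv,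
      ← Real.rpow_neg hlampos.le, ← hlam_rpow_add]
    ring
  rw [term1, term2] at key
  have hLp1 : 1 ≤ L ^ p := Real.one_le_rpow hL1 hppos.le
  have hrpos : 0 < lam ^ (-c) := Real.rpow_pos_of_pos hlampos _
  have hneg : lam ^ (-(2 / (1 - θ))) = lam ^ (-c) := by rw [hc]
  calc (μ {x | lam < F x}).toReal
      ≤ C₁ * lam ^ (-c) + C₂ * c ^ p * L ^ p * lam ^ (-c) := key
    _ ≤ C₁ * lam ^ (-c) * L ^ p + C₂ * c ^ p * L ^ p * lam ^ (-c) := by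
        nlinarith [mul_pos hC₁ hrpos]
    _ = (C₁ + C₂ * c ^ p) * lam ^ (-(2 / (1 - θ))) * L ^ p := by rw [hneg]; ring
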